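/- The group K = ker φ is one-ended: the Cayley graph of K with respect to the generating set T = {ba⁻¹, dc⁻¹, da⁻¹} has exactly one end, i.e., its space of ends is nonempty and any two ends are equal. -/

import Mathlib

/-- `F₂`, the free group on two generators. -/
abbrev F2 : Type := FreeGroup (Fin 2)

/-- `a`, a free generator of the first factor of `F₂ × F₂`. -/
def a : F2 × F2 := (FreeGroup.of 0, 1)
/-- `b`, a free generator of the first factor of `F₂ × F₂`. -/
def b : F2 × F2 := (FreeGroup.of 1, 1)
/-- `c`, a free generator of the second factor of `F₂ × F₂`. -/
def c : F2 × F2 := (1, FreeGroup.of 0)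
/-- `d`, a free generator of the second factor of `F₂ × F₂`. -/
def d : F2 × F2 := (1, FreeGroup.of 1)


/-- The Cayley graph of `K = ker φ` with respect to `T = {ba⁻¹, dc⁻¹, da⁻¹}`: distinct
vertices `x, y` are adjacent iff `x⁻¹y ∈ T` or `y⁻¹x ∈ T`. -/
def cayleyK (φ : F2 × F2 →* Multiplicative ℤ) : SimpleGraph φ.ker :=
  SimpleGraph.fromRel fun x y =>
    (x : F2 × F2)⁻¹ * (y : F2 × F2) ∈ ({b * a⁻¹, d * c⁻¹, d * a⁻¹} : Set (F2 × F2))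

namespace StallingsAux


/-- the homomorphism `a,c ↦ -1`, `b,d ↦ 1`. -/
noncomputable def eps : F2 →* Multiplicative ℤ :=
  FreeGroup.lift (fun i => Multiplicative.ofAdd (if i = 0 then (-1 : ℤ) else 1))

/-- total exponent sum on one factor. -/
noncomputable def chi : F2 →* Multiplicative ℤ :=
  FreeGroup.lift (fun _ => Multiplicative.ofAdd 1)

noncomputable def epsz (w : F2) : ℤ := Multiplicative.toAdd (eps w)
noncomputable def chiz (w : F2) : ℤ := Multiplicative.toAdd (chi w)

@[simp] lemma epsz_mul (u v : F2) : epsz (u * v) = epsz u + epsz v := by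
  simp [epsz, map_mul]
@[simp] lemma epsz_one : epsz 1 = 0 := by simp [epsz]
@[simp] lemma epsz_inv (u : F2) : epsz u⁻¹ = - epsz u := by simp [epsz]
@[simp] lemma epsz_zpow (u : F2) (n : ℤ) : epsz (u ^ n) = n * epsz u := by
  simp [epsz, map_zpow]
@[simp] lemma epsz_pow (u : F2) (n : ℕ) : epsz (u ^ n) = n * epsz u := by
  simp [epsz, map_pow]
@[simp] lemma epsz_of0 : epsz (FreeGroup.of 0) = -1 := by simp [epsz, eps]
@[simp] lemma epsz_of1 : epsz (FreeGroup.of 1) = 1 := by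
  simp [epsz, eps, FreeGroup.lift_apply_of]

@[simp] lemma chiz_mul (u v : F2) : chiz (u * v) = chiz u + chiz v := by
  simp [chiz, map_mul]
@[simp] lemma chiz_one : chiz 1 = 0 := by simp [chiz]
@[simp] lemma chiz_inv (u : F2) : chiz u⁻¹ = - chiz u := by simp [chiz]
@[simp] lemma chiz_zpow (u : F2) (n : ℤ) : chiz (u ^ n) = n * chiz u := by
  simp [chiz, map_zpow]
@[simp] lemma chiz_pow (u : F2) (n : ℕ) : chiz (u ^ n) = n * chiz u := by
  simp [chiz, map_pow]
@[simp] lemma chiz_of (i : Fin 2) : chiz (FreeGroup.of i) = 1 := by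
  simp [chiz, chi, FreeGroup.lift_apply_of]

lemma abs_epsz_le_norm (w : F2) : |epsz w| ≤ (w.norm : ℤ) := by
  have key : ∀ L : List (Fin 2 × Bool),
      |Multiplicative.toAdd ((L.map fun x => bif x.2 then
        (Multiplicative.ofAdd (if x.1 = 0 then (-1:ℤ) else 1)) else
        (Multiplicative.ofAdd (if x.1 = 0 then (-1:ℤ) else 1))⁻¹).prod)| ≤ (L.length : ℤ) := by
    intro L
    induction L with
    | nil => simp
    | cons hd tl ih =>
      simp only [List.map_cons, List.prod_cons, toAdd_mul, List.length_cons]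
      refine le_trans (abs_add_le _ _) ?_
      push_cast
      have h1 : |Multiplicative.toAdd (bif hd.2 then
          (Multiplicative.ofAdd (if hd.1 = 0 then (-1:ℤ) else 1)) else
          (Multiplicative.ofAdd (if hd.1 = 0 then (-1:ℤ) else 1))⁻¹)| ≤ 1 := by
        cases hd.2 <;> split <;> simp
      omega
  have hw : eps w = FreeGroup.lift (fun i => Multiplicative.ofAdd (if i = 0 then (-1:ℤ) else 1))
      (FreeGroup.mk w.toWord) := by rw [FreeGroup.mk_toWord]; rfl
  rw [epsz, hw, FreeGroup.lift_mk]
  exact key w.toWord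



def gp : F2 × F2 := b * a⁻¹
def gq : F2 × F2 := d * c⁻¹
def gt : F2 × F2 := d * a⁻¹
def w0 : F2 := FreeGroup.of 1 * (FreeGroup.of 0)⁻¹

@[simp] lemma gp_fst : gp.1 = w0 := rfl
@[simp] lemma gp_snd : gp.2 = 1 := by simp [gp, a, b]
@[simp] lemma gq_fst : gq.1 = 1 := by simp [gq, c, d]
@[simp] lemma gq_snd : gq.2 = w0 := rfl
@[simp] lemma gt_fst : gt.1 = (FreeGroup.of 0)⁻¹ := by simp [gt, a, d]
@[simp] lemma gt_snd : gt.2 = FreeGroup.of 1 := by simp [gt, a, d]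

def sgn (g : F2 × F2) (s : Bool) : F2 × F2 := bif s then g else g⁻¹
def val1 (m : Bool × Bool) : F2 × F2 := bif m.1 then sgn gt m.2 else sgn gp m.2
def val2 (m : Bool × Bool) : F2 × F2 := bif m.1 then sgn gt m.2 else sgn gq m.2
def prod1 (l : List (Bool × Bool)) : F2 × F2 := (l.map val1).prod
def prod2 (l : List (Bool × Bool)) : F2 × F2 := (l.map val2).prod
@[simp] lemma prod1_nil : prod1 [] = 1 := rfl
@[simp] lemma prod2_nil : prod2 [] = 1 := rfl
@[simp] lemma prod1_cons (m l) : prod1 (m :: l) = val1 m * prod1 l := by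
  simp [prod1]
@[simp] lemma prod2_cons (m l) : prod2 (m :: l) = val2 m * prod2 l := by
  simp [prod2]
lemma prod1_append (l₁ l₂) : prod1 (l₁ ++ l₂) = prod1 l₁ * prod1 l₂ := by
  simp [prod1]
lemma prod2_append (l₁ l₂) : prod2 (l₁ ++ l₂) = prod2 l₁ * prod2 l₂ := by
  simp [prod2]

def tcm (m : Bool × Bool) : ℕ := if m.1 then 1 else 0
def tsm (m : Bool × Bool) : ℤ := if m.1 then (if m.2 then 1 else -1) else 0
def tc (l : List (Bool × Bool)) : ℕ := (l.map tcm).sum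
def ts (l : List (Bool × Bool)) : ℤ := (l.map tsm).sum

lemma abs_tsm_le (m : Bool × Bool) : |tsm m| ≤ (tcm m : ℤ) := by
  rcases m with ⟨t, u⟩
  cases t <;> cases u <;> simp [tsm, tcm]

@[simp] lemma tc_nil : tc [] = 0 := rfl
@[simp] lemma ts_nil : ts [] = 0 := rfl
@[simp] lemma tc_cons (m l) : tc (m :: l) = tcm m + tc l := by simp [tc]
@[simp] lemma ts_cons (m l) : ts (m :: l) = tsm m + ts l := by simp [ts]
lemma tc_append (l₁ l₂) : tc (l₁ ++ l₂) = tc l₁ + tc l₂ := by simp [tc]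
lemma ts_append (l₁ l₂) : ts (l₁ ++ l₂) = ts l₁ + ts l₂ := by simp [ts]

lemma abs_ts_le_tc (l : List (Bool × Bool)) : |ts l| ≤ (tc l : ℤ) := by
  induction l with
  | nil => simp
  | cons m l ih =>
    rw [ts_cons, tc_cons]
    refine le_trans (abs_add_le _ _) ?_
    have := abs_tsm_le m
    push_cast
    omega

lemma prod1_snd (l : List (Bool × Bool)) : (prod1 l).2 = (FreeGroup.of 1) ^ (ts l) := by
  induction l with
  | nil => simp
  | cons m l ih =>
    rw [prod1_cons, ts_cons, Prod.snd_mul, ih, zpow_add]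
    congr 1
    rcases m with ⟨mt, ms⟩
    cases mt <;> cases ms <;> simp [val1, sgn, tsm]
lemma prod2_fst (l : List (Bool × Bool)) : (prod2 l).1 = (FreeGroup.of 0) ^ (-ts l) := by
  induction l with
  | nil => simp
  | cons m l ih =>
    rw [prod2_cons, ts_cons, Prod.fst_mul, ih, neg_add, zpow_add]
    congr 1
    rcases m with ⟨mt, ms⟩
    cases mt <;> cases ms <;> simp [val2, sgn, tsm]

/-- a list of identical moves realizing a `k`-th power -/
def rep (t : Bool) (k : ℤ) : List (Bool × Bool) := List.replicate k.natAbs (t, decide (0 ≤ k))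

lemma of_eq_pure (i : Fin 2) : FreeGroup.of i = pure i := rfl

lemma sgn_pow (g : F2 × F2) (k : ℤ) : (sgn g (decide (0 ≤ k))) ^ k.natAbs = g ^ k := by
  by_cases h : 0 ≤ k
  · rw [decide_eq_true h]
    simp only [sgn, cond_true]
    rw [← zpow_natCast]
    congr 1
    omega
  · rw [decide_eq_false h]
    simp only [sgn, cond_false]
    rw [inv_pow, ← zpow_natCast, ← zpow_neg]
    congr 1
    omega

lemma prod1_rep_false (k : ℤ) : prod1 (rep false k) = gp ^ k := by
  rw [prod1, rep, List.map_replicate, List.prod_replicate]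
  exact sgn_pow gp k
lemma prod1_rep_true (k : ℤ) : prod1 (rep true k) = gt ^ k := by
  rw [prod1, rep, List.map_replicate, List.prod_replicate]
  exact sgn_pow gt k
lemma prod2_rep_false (k : ℤ) : prod2 (rep false k) = gq ^ k := by
  rw [prod2, rep, List.map_replicate, List.prod_replicate]
  exact sgn_pow gq k
lemma prod2_rep_true (k : ℤ) : prod2 (rep true k) = gt ^ k := by
  rw [prod2, rep, List.map_replicate, List.prod_replicate]
  exact sgn_pow gt k
@[simp] lemma tc_rep_false (k : ℤ) : tc (rep false k) = 0 := by simp [tc, rep, tcm]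
@[simp] lemma tc_rep_true (k : ℤ) : tc (rep true k) = k.natAbs := by simp [tc, rep, tcm]
@[simp] lemma ts_rep_false (k : ℤ) : ts (rep false k) = 0 := by simp [ts, rep, tsm]
@[simp] lemma ts_rep_true (k : ℤ) : ts (rep true k) = k := by
  by_cases h : 0 ≤ k
  · rw [ts, rep, decide_eq_true h]
    simp only [List.map_replicate, List.sum_replicate, nsmul_eq_mul, tsm, if_true]
    omega
  · rw [ts, rep, decide_eq_false h]
    simp only [List.map_replicate, List.sum_replicate, nsmul_eq_mul, tsm, if_true,
      Bool.false_eq_true, ite_false]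
    omega

lemma sur1 (w : F2) : ∃ l, (prod1 l).1 = w := by
  induction w using FreeGroup.induction_on with
  | C1 => exact ⟨[], rfl⟩
  | of i =>
    fin_cases i
    · exact ⟨[(true, false)], by simp [val1, sgn, of_eq_pure]⟩
    · refine ⟨[(false, true), (true, false)], ?_⟩
      simp [val1, sgn, w0, of_eq_pure]
  | inv_of i _ =>
    fin_cases i
    · exact ⟨[(true, true)], by simp [val1, sgn, of_eq_pure]⟩
    · refine ⟨[(true, true), (false, false)], ?_⟩
      simp [val1, sgn, w0, of_eq_pure]
  | mul x y hx hy =>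
    obtain ⟨lx, hlx⟩ := hx
    obtain ⟨ly, hly⟩ := hy
    exact ⟨lx ++ ly, by rw [prod1_append, Prod.fst_mul, hlx, hly]⟩

lemma sur2 (w : F2) : ∃ l, (prod2 l).2 = w := by
  induction w using FreeGroup.induction_on with
  | C1 => exact ⟨[], rfl⟩
  | of i =>
    fin_cases i
    · refine ⟨[(false, false), (true, true)], ?_⟩
      simp [val2, sgn, w0, of_eq_pure]
    · exact ⟨[(true, true)], by simp [val2, sgn, of_eq_pure]⟩
  | inv_of i _ =>
    fin_cases i
    · refine ⟨[(true, false), (false, true)], ?_⟩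
      simp [val2, sgn, w0, of_eq_pure]
    · exact ⟨[(true, false)], by simp [val2, sgn, of_eq_pure]⟩
  | mul x y hx hy =>
    obtain ⟨lx, hlx⟩ := hx
    obtain ⟨ly, hly⟩ := hy
    exact ⟨lx ++ ly, by rw [prod2_append, Prod.snd_mul, hlx, hly]⟩



lemma chi_eq (w : F2) : chi w = Multiplicative.ofAdd (chiz w) := by
  rw [chiz, ofAdd_toAdd]

section Phi
variable (φ : F2 × F2 →* Multiplicative ℤ)
    (ha : φ a = Multiplicative.ofAdd 1) (hb : φ b = Multiplicative.ofAdd 1)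
    (hc : φ c = Multiplicative.ofAdd 1) (hd : φ d = Multiplicative.ofAdd 1)

include ha hb in
lemma phi_inl : φ.comp (MonoidHom.inl F2 F2) = chi := by
  refine FreeGroup.ext_hom _ _ (fun i => ?_)
  fin_cases i
  · show φ.comp (MonoidHom.inl F2 F2) (FreeGroup.of 0) = chi (FreeGroup.of 0)
    have : φ.comp (MonoidHom.inl F2 F2) (FreeGroup.of 0) = φ a := rfl
    rw [this, ha, chi, FreeGroup.lift_apply_of]
  · show φ.comp (MonoidHom.inl F2 F2) (FreeGroup.of 1) = chi (FreeGroup.of 1)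
    have : φ.comp (MonoidHom.inl F2 F2) (FreeGroup.of 1) = φ b := rfl
    rw [this, hb, chi, FreeGroup.lift_apply_of]

include hc hd in
lemma phi_inr : φ.comp (MonoidHom.inr F2 F2) = chi := by
  refine FreeGroup.ext_hom _ _ (fun i => ?_)
  fin_cases i
  · show φ.comp (MonoidHom.inr F2 F2) (FreeGroup.of 0) = chi (FreeGroup.of 0)
    have : φ.comp (MonoidHom.inr F2 F2) (FreeGroup.of 0) = φ c := rfl
    rw [this, hc, chi, FreeGroup.lift_apply_of]
  · show φ.comp (MonoidHom.inr F2 F2) (FreeGroup.of 1) = chi (FreeGroup.of 1)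
    have : φ.comp (MonoidHom.inr F2 F2) (FreeGroup.of 1) = φ d := rfl
    rw [this, hd, chi, FreeGroup.lift_apply_of]

include ha hb hc hd in
lemma phi_apply (x : F2 × F2) :
    φ x = Multiplicative.ofAdd (chiz x.1 + chiz x.2) := by
  have hx : x = (x.1, 1) * (1, x.2) := by ext <;> simp
  have h1 : φ (x.1, 1) = chi x.1 := by rw [← phi_inl φ ha hb]; rfl
  have h2 : φ (1, x.2) = chi x.2 := by rw [← phi_inr φ hc hd]; rfl
  have hmul : φ x = φ (x.1, 1) * φ (1, x.2) := by rw [← map_mul, ← hx]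
  rw [hmul, h1, h2, chi_eq, chi_eq, ← ofAdd_add]

include ha hb hc hd in
lemma mem_ker_iff (x : F2 × F2) : x ∈ φ.ker ↔ chiz x.1 + chiz x.2 = 0 := by
  rw [MonoidHom.mem_ker, phi_apply φ ha hb hc hd, ofAdd_eq_one]

end Phi

section Walks
variable (φ : F2 × F2 →* Multiplicative ℤ)
    (ha : φ a = Multiplicative.ofAdd 1) (hb : φ b = Multiplicative.ofAdd 1)
    (hc : φ c = Multiplicative.ofAdd 1) (hd : φ d = Multiplicative.ofAdd 1)

@[simp] lemma chiz_w0 : chiz w0 = 0 := by simp [w0]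
@[simp] lemma epsz_w0 : epsz w0 = 2 := by simp [w0]

lemma w0_ne_one : w0 ≠ 1 := by
  intro h
  have := epsz_w0
  rw [h, epsz_one] at this
  omega

lemma of1_ne_one : (FreeGroup.of 1 : F2) ≠ 1 := by
  intro h
  have := epsz_of1
  rw [h, epsz_one] at this
  omega

lemma gp_ne_one : gp ≠ 1 := by
  intro h
  exact w0_ne_one (by rw [← gp_fst, h]; rfl)
lemma gq_ne_one : gq ≠ 1 := by
  intro h
  exact w0_ne_one (by rw [← gq_snd, h]; rfl)
lemma gt_ne_one : gt ≠ 1 := by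
  intro h
  exact of1_ne_one (by rw [← gt_snd, h]; rfl)

include ha hb hc hd in
lemma gp_mem : gp ∈ φ.ker := by
  rw [mem_ker_iff φ ha hb hc hd, gp_fst, gp_snd]; simp
include ha hb hc hd in
lemma gq_mem : gq ∈ φ.ker := by
  rw [mem_ker_iff φ ha hb hc hd, gq_fst, gq_snd]; simp
include ha hb hc hd in
lemma gt_mem : gt ∈ φ.ker := by
  rw [mem_ker_iff φ ha hb hc hd, gt_fst, gt_snd]; simp

lemma sgn_mem {g : F2 × F2} (h : g ∈ φ.ker) (s : Bool) : sgn g s ∈ φ.ker := by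
  cases s
  · exact inv_mem h
  · exact h

include ha hb hc hd in
lemma val1_mem (m : Bool × Bool) : val1 m ∈ φ.ker := by
  rcases m with ⟨t, s⟩
  cases t
  · exact sgn_mem φ (gp_mem φ ha hb hc hd) s
  · exact sgn_mem φ (gt_mem φ ha hb hc hd) s
include ha hb hc hd in
lemma val2_mem (m : Bool × Bool) : val2 m ∈ φ.ker := by
  rcases m with ⟨t, s⟩
  cases t
  · exact sgn_mem φ (gq_mem φ ha hb hc hd) s
  · exact sgn_mem φ (gt_mem φ ha hb hc hd) s

include ha hb hc hd in
lemma prod1_mem (l : List (Bool × Bool)) : prod1 l ∈ φ.ker := by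
  induction l with
  | nil => exact one_mem _
  | cons m l ih => rw [prod1_cons]; exact mul_mem (val1_mem φ ha hb hc hd m) ih
include ha hb hc hd in
lemma prod2_mem (l : List (Bool × Bool)) : prod2 l ∈ φ.ker := by
  induction l with
  | nil => exact one_mem _
  | cons m l ih => rw [prod2_cons]; exact mul_mem (val2_mem φ ha hb hc hd m) ih

/-- reachability avoiding the finite set `S` -/
def Avoid (S : Finset φ.ker) (x y : φ.ker) : Prop :=
  Relation.ReflTransGen (fun z w => z ∉ S ∧ w ∉ S ∧ (cayleyK φ).Adj z w) x y

/-- a bound on the size of elements of `S` -/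
def bnd (S : Finset φ.ker) : ℕ :=
  S.sup fun s => ((s : F2 × F2).1).norm + ((s : F2 × F2).2).norm

variable {φ}

lemma not_mem_of_norm1 {S : Finset φ.ker} {x : φ.ker}
    (h : bnd φ S < ((x : F2 × F2).1).norm) : x ∉ S := by
  intro hx
  have h3 : ((x : F2 × F2).1).norm + ((x : F2 × F2).2).norm ≤ bnd φ S :=
    Finset.le_sup (f := fun s : φ.ker => ((s : F2 × F2).1).norm + ((s : F2 × F2).2).norm) hx
  omega
lemma not_mem_of_norm2 {S : Finset φ.ker} {x : φ.ker}
    (h : bnd φ S < ((x : F2 × F2).2).norm) : x ∉ S := by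
  intro hx
  have h3 : ((x : F2 × F2).1).norm + ((x : F2 × F2).2).norm ≤ bnd φ S :=
    Finset.le_sup (f := fun s : φ.ker => ((s : F2 × F2).1).norm + ((s : F2 × F2).2).norm) hx
  omega

lemma not_mem_of_abs1 {S : Finset φ.ker} {x : φ.ker}
    (h : (bnd φ S : ℤ) < |epsz (x : F2 × F2).1|) : x ∉ S := by
  apply not_mem_of_norm1
  have h2 := abs_epsz_le_norm (x : F2 × F2).1
  omega
lemma not_mem_of_abs2 {S : Finset φ.ker} {x : φ.ker}
    (h : (bnd φ S : ℤ) < |epsz (x : F2 × F2).2|) : x ∉ S := by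
  apply not_mem_of_norm2
  have h2 := abs_epsz_le_norm (x : F2 × F2).2
  omega

variable (φ)

lemma adj_mul (x : φ.ker) (g : F2 × F2) (hgk : g ∈ φ.ker) (hg1 : g ≠ 1)
    (hg : g ∈ ({b * a⁻¹, d * c⁻¹, d * a⁻¹} : Set (F2 × F2)) ∨
      g⁻¹ ∈ ({b * a⁻¹, d * c⁻¹, d * a⁻¹} : Set (F2 × F2))) :
    (cayleyK φ).Adj x (x * ⟨g, hgk⟩) := by
  rw [cayleyK, SimpleGraph.fromRel_adj]
  constructor
  · intro hxy
    apply hg1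
    have h2 : (x : F2 × F2) = (x : F2 × F2) * g := congrArg _ hxy
    exact (left_eq_mul.mp h2)
  · rcases hg with h | h
    · left
      have key : ((x : F2 × F2))⁻¹ * ((x * ⟨g, hgk⟩ : φ.ker) : F2 × F2) = g := by
        show ((x : F2 × F2))⁻¹ * ((x : F2 × F2) * g) = g
        group
      rw [key]; exact h
    · right
      have key : (((x * ⟨g, hgk⟩ : φ.ker) : F2 × F2))⁻¹ * (x : F2 × F2) = g⁻¹ := by
        show ((x : F2 × F2) * g)⁻¹ * (x : F2 × F2) = g⁻¹
        group
      rw [key]; exact h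

lemma sgn_adj (x : φ.ker) {g : F2 × F2} (hgk : g ∈ φ.ker) (hg1 : g ≠ 1)
    (hg : g ∈ ({b * a⁻¹, d * c⁻¹, d * a⁻¹} : Set (F2 × F2))) (s : Bool) :
    (cayleyK φ).Adj x (x * ⟨sgn g s, sgn_mem φ hgk s⟩) := by
  cases s
  · exact adj_mul φ x g⁻¹ (inv_mem hgk) (inv_ne_one.mpr hg1) (Or.inr (by rw [inv_inv]; exact hg))
  · exact adj_mul φ x g hgk hg1 (Or.inl hg)

include ha hb hc hd in
lemma val1_adj (x : φ.ker) (m : Bool × Bool) :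
    (cayleyK φ).Adj x (x * ⟨val1 m, val1_mem φ ha hb hc hd m⟩) := by
  rcases m with ⟨t, s⟩
  cases t
  · exact sgn_adj φ x (gp_mem φ ha hb hc hd) gp_ne_one (by left; rfl) s
  · exact sgn_adj φ x (gt_mem φ ha hb hc hd) gt_ne_one (by right; right; rfl) s
include ha hb hc hd in
lemma val2_adj (x : φ.ker) (m : Bool × Bool) :
    (cayleyK φ).Adj x (x * ⟨val2 m, val2_mem φ ha hb hc hd m⟩) := by
  rcases m with ⟨t, s⟩
  cases t
  · exact sgn_adj φ x (gq_mem φ ha hb hc hd) gq_ne_one (by right; left; rfl) s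
  · exact sgn_adj φ x (gt_mem φ ha hb hc hd) gt_ne_one (by right; right; rfl) s

lemma abs_add_ge (A e : ℤ) : |A| - |e| ≤ |A + e| := by
  have h1 : |A| = |A + e + -e| := by ring_nf
  have h2 : |A + e + -e| ≤ |A + e| + |-e| := abs_add_le _ _
  rw [abs_neg] at h2
  omega

lemma val1_snd (m : Bool × Bool) : (val1 m).2 = FreeGroup.of 1 ^ tsm m := by
  rcases m with ⟨t, s⟩
  cases t <;> cases s <;> simp [val1, sgn, tsm]
lemma val2_fst (m : Bool × Bool) : (val2 m).1 = FreeGroup.of 0 ^ (-tsm m) := by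
  rcases m with ⟨t, s⟩
  cases t <;> cases s <;> simp [val2, sgn, tsm]

end Walks

section Phases
variable (φ : F2 × F2 →* Multiplicative ℤ)
    (ha : φ a = Multiplicative.ofAdd 1) (hb : φ b = Multiplicative.ofAdd 1)
    (hc : φ c = Multiplicative.ofAdd 1) (hd : φ d = Multiplicative.ofAdd 1)

include ha hb hc hd in
/-- Phase lemma for first-coordinate words: a list of `p`/`t` moves can be applied
as long as the second coordinate has `eps`-value exceeding `bnd S` plus the number
of `t`-moves. -/
lemma ph1 (S : Finset φ.ker) (l : List (Bool × Bool)) : ∀ x : φ.ker,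
    (bnd φ S : ℤ) + tc l < |epsz (x : F2 × F2).2| →
    ∃ y : φ.ker, Avoid φ S x y ∧
      (y : F2 × F2).1 = (x : F2 × F2).1 * (prod1 l).1 ∧
      (y : F2 × F2).2 = (x : F2 × F2).2 * FreeGroup.of 1 ^ ts l := by
  induction l with
  | nil =>
    intro x h
    exact ⟨x, Relation.ReflTransGen.refl, by simp, by simp⟩
  | cons m l ih =>
    intro x h
    have htcnn : (0:ℤ) ≤ tc l := Int.natCast_nonneg _
    have htcmnn : (0:ℤ) ≤ tcm m := Int.natCast_nonneg _
    have habs := abs_tsm_le m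
    set g : φ.ker := ⟨val1 m, val1_mem φ ha hb hc hd m⟩ with hgdef
    have hxg2 : ((x * g : φ.ker) : F2 × F2).2 = (x : F2 × F2).2 * FreeGroup.of 1 ^ tsm m := by
      show ((x : F2 × F2) * val1 m).2 = _
      rw [Prod.snd_mul, val1_snd]
    have heps : epsz ((x * g : φ.ker) : F2 × F2).2 = epsz (x : F2 × F2).2 + tsm m := by
      rw [hxg2]; simp
    have htc : (tc (m :: l) : ℤ) = (tcm m : ℤ) + tc l := by rw [tc_cons]; push_cast; ring
    rw [htc] at h
    have hge := abs_add_ge (epsz (x : F2 × F2).2) (tsm m)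
    have hcond : (bnd φ S : ℤ) + tc l < |epsz ((x * g : φ.ker) : F2 × F2).2| := by
      rw [heps]
      have h1 : |tsm m| ≤ (tcm m : ℤ) := habs
      linarith
    obtain ⟨y, hy, h1, h2⟩ := ih (x * g) hcond
    have hxnot : x ∉ S := not_mem_of_abs2 (by linarith)
    have hxgnot : (x * g) ∉ S := not_mem_of_abs2 (by linarith)
    refine ⟨y, Relation.ReflTransGen.head
      ⟨hxnot, hxgnot, val1_adj φ ha hb hc hd x m⟩ hy, ?_, ?_⟩
    · rw [h1, prod1_cons, Prod.fst_mul, ← mul_assoc]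
      rfl
    · rw [h2, hxg2, ts_cons, zpow_add, ← mul_assoc]

include ha hb hc hd in
/-- Phase lemma for second-coordinate words. -/
lemma ph2 (S : Finset φ.ker) (l : List (Bool × Bool)) : ∀ x : φ.ker,
    (bnd φ S : ℤ) + tc l < |epsz (x : F2 × F2).1| →
    ∃ y : φ.ker, Avoid φ S x y ∧
      (y : F2 × F2).1 = (x : F2 × F2).1 * FreeGroup.of 0 ^ (-ts l) ∧
      (y : F2 × F2).2 = (x : F2 × F2).2 * (prod2 l).2 := by
  induction l with
  | nil =>
    intro x h
    exact ⟨x, Relation.ReflTransGen.refl, by simp, by simp⟩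
  | cons m l ih =>
    intro x h
    have htcnn : (0:ℤ) ≤ tc l := Int.natCast_nonneg _
    have htcmnn : (0:ℤ) ≤ tcm m := Int.natCast_nonneg _
    have habs := abs_tsm_le m
    set g : φ.ker := ⟨val2 m, val2_mem φ ha hb hc hd m⟩ with hgdef
    have hxg1 : ((x * g : φ.ker) : F2 × F2).1 = (x : F2 × F2).1 * FreeGroup.of 0 ^ (-tsm m) := by
      show ((x : F2 × F2) * val2 m).1 = _
      rw [Prod.fst_mul, val2_fst]
    have heps : epsz ((x * g : φ.ker) : F2 × F2).1 = epsz (x : F2 × F2).1 + tsm m := by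
      rw [hxg1]; simp
    have htc : (tc (m :: l) : ℤ) = (tcm m : ℤ) + tc l := by rw [tc_cons]; push_cast; ring
    rw [htc] at h
    have hge := abs_add_ge (epsz (x : F2 × F2).1) (tsm m)
    have hcond : (bnd φ S : ℤ) + tc l < |epsz ((x * g : φ.ker) : F2 × F2).1| := by
      rw [heps]
      linarith
    obtain ⟨y, hy, h1, h2⟩ := ih (x * g) hcond
    have hxnot : x ∉ S := not_mem_of_abs1 (by linarith)
    have hxgnot : (x * g) ∉ S := not_mem_of_abs1 (by linarith)
    refine ⟨y, Relation.ReflTransGen.head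
      ⟨hxnot, hxgnot, val2_adj φ ha hb hc hd x m⟩ hy, ?_, ?_⟩
    · rw [h1, hxg1, ts_cons, neg_add, zpow_add, ← mul_assoc]
    · rw [h2, prod2_cons, Prod.snd_mul, ← mul_assoc]
      rfl

include ha hb hc hd in
/-- Pumping the first coordinate by powers of `p`, keeping the second coordinate fixed. -/
lemma pump1 (S : Finset φ.ker) (n : ℕ) : ∀ x : φ.ker,
    bnd φ S < ((x : F2 × F2).2).norm →
    ∃ y : φ.ker, Avoid φ S x y ∧
      (y : F2 × F2).1 = (x : F2 × F2).1 * w0 ^ (n : ℤ) ∧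
      (y : F2 × F2).2 = (x : F2 × F2).2 := by
  induction n with
  | zero =>
    intro x h
    exact ⟨x, Relation.ReflTransGen.refl, by simp, by simp⟩
  | succ n ih =>
    intro x h
    set g : φ.ker := ⟨gp, gp_mem φ ha hb hc hd⟩ with hgdef
    have hxg2 : ((x * g : φ.ker) : F2 × F2).2 = (x : F2 × F2).2 := by
      show ((x : F2 × F2) * gp).2 = _
      rw [Prod.snd_mul, gp_snd, mul_one]
    obtain ⟨y, hy, h1, h2⟩ := ih (x * g) (by rw [hxg2]; exact h)
    have hxnot : x ∉ S := not_mem_of_norm2 h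
    have hxgnot : (x * g) ∉ S := not_mem_of_norm2 (by rw [hxg2]; exact h)
    have hadj : (cayleyK φ).Adj x (x * g) :=
      adj_mul φ x gp (gp_mem φ ha hb hc hd) gp_ne_one (Or.inl (by left; rfl))
    refine ⟨y, Relation.ReflTransGen.head ⟨hxnot, hxgnot, hadj⟩ hy, ?_, ?_⟩
    · rw [h1]
      show ((x : F2 × F2) * gp).1 * w0 ^ (n : ℤ) = _
      rw [Prod.fst_mul, gp_fst, mul_assoc, ← zpow_one_add]
      norm_num
      ring_nf
    · rw [h2, hxg2]

include ha hb hc hd in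
/-- Pumping the second coordinate by powers of `q`, keeping the first coordinate fixed. -/
lemma pump2 (S : Finset φ.ker) (n : ℕ) : ∀ x : φ.ker,
    bnd φ S < ((x : F2 × F2).1).norm →
    ∃ y : φ.ker, Avoid φ S x y ∧
      (y : F2 × F2).1 = (x : F2 × F2).1 ∧
      (y : F2 × F2).2 = (x : F2 × F2).2 * w0 ^ (n : ℤ) := by
  induction n with
  | zero =>
    intro x h
    exact ⟨x, Relation.ReflTransGen.refl, by simp, by simp⟩
  | succ n ih =>
    intro x h
    set g : φ.ker := ⟨gq, gq_mem φ ha hb hc hd⟩ with hgdef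
    have hxg1 : ((x * g : φ.ker) : F2 × F2).1 = (x : F2 × F2).1 := by
      show ((x : F2 × F2) * gq).1 = _
      rw [Prod.fst_mul, gq_fst, mul_one]
    obtain ⟨y, hy, h1, h2⟩ := ih (x * g) (by rw [hxg1]; exact h)
    have hxnot : x ∉ S := not_mem_of_norm1 h
    have hxgnot : (x * g) ∉ S := not_mem_of_norm1 (by rw [hxg1]; exact h)
    have hadj : (cayleyK φ).Adj x (x * g) :=
      adj_mul φ x gq (gq_mem φ ha hb hc hd) gq_ne_one (Or.inl (by right; left; rfl))
    refine ⟨y, Relation.ReflTransGen.head ⟨hxnot, hxgnot, hadj⟩ hy, ?_, ?_⟩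
    · rw [h1, hxg1]
    · rw [h2]
      show ((x : F2 × F2) * gq).2 * w0 ^ (n : ℤ) = _
      rw [Prod.snd_mul, gq_snd, mul_assoc, ← zpow_one_add]
      norm_num
      ring_nf

end Phases

section Assemble
variable (φ : F2 × F2 →* Multiplicative ℤ)
    (ha : φ a = Multiplicative.ofAdd 1) (hb : φ b = Multiplicative.ofAdd 1)
    (hc : φ c = Multiplicative.ofAdd 1) (hd : φ d = Multiplicative.ofAdd 1)

lemma fst_zpow (g : F2 × F2) (k : ℤ) : (g ^ k).1 = g.1 ^ k :=
  map_zpow (MonoidHom.fst F2 F2) g k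
lemma snd_zpow (g : F2 × F2) (k : ℤ) : (g ^ k).2 = g.2 ^ k :=
  map_zpow (MonoidHom.snd F2 F2) g k

include ha hb hc hd in
/-- Case A: a vertex whose second coordinate is long can be connected,
avoiding `S`, to the standard far-away vertex. -/
lemma caseA (S : Finset φ.ker) (x : φ.ker) (hx2 : bnd φ S < ((x : F2 × F2).2).norm) :
    ∃ z : φ.ker, Avoid φ S x z ∧
      (z : F2 × F2).1 = w0 ^ ((bnd φ S : ℤ) + 1) ∧
      (z : F2 × F2).2 = w0 ^ ((bnd φ S : ℤ) + 1) := by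
  classical
  set N : ℤ := (bnd φ S : ℤ) with hN
  have hN0 : 0 ≤ N := Int.natCast_nonneg _
  obtain ⟨lu, hlu⟩ := sur1 ((x : F2 × F2).1)⁻¹
  obtain ⟨lv, hlv⟩ := sur2 ((x : F2 × F2).2)⁻¹
  set n : ℕ := ((x : F2 × F2).1).norm + bnd φ S + tc lv + 1 with hn
  set m : ℤ := N + tc lv + tc lu + 1 with hm
  -- phase 1 : pump the first coordinate
  obtain ⟨x₁, A1, e11, e12⟩ := pump1 φ ha hb hc hd S n x hx2
  have heps1 : epsz (x₁ : F2 × F2).1 = epsz (x : F2 × F2).1 + 2 * n := by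
    rw [e11, epsz_mul, epsz_zpow, epsz_w0]; ring
  have habs1 := abs_epsz_le_norm (x : F2 × F2).1
  -- phase 2 : make the second coordinate equal to w0 ^ m
  set l2 : List (Bool × Bool) := lv ++ rep false m with hl2
  have htc2 : (tc l2 : ℤ) = tc lv := by rw [hl2, tc_append, tc_rep_false]; push_cast; ring
  have hts2 : ts l2 = ts lv := by rw [hl2, ts_append, ts_rep_false, add_zero]
  obtain ⟨x₂, A2, e21, e22⟩ := ph2 φ ha hb hc hd S l2 x₁ (by
    rw [htc2]
    have : epsz (x₁ : F2 × F2).1 ≤ |epsz (x₁ : F2 × F2).1| := le_abs_self _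
    have hn' : (n : ℤ) = ((x : F2 × F2).1).norm + N + tc lv + 1 := by
      rw [hn]; push_cast; ring
    have h3 := neg_abs_le (epsz (x : F2 × F2).1)
    linarith)
  have hx22 : (x₂ : F2 × F2).2 = w0 ^ m := by
    rw [e22, e12, hl2, prod2_append, Prod.snd_mul, hlv, prod2_rep_false, snd_zpow, gq_snd,
      ← mul_assoc, mul_inv_cancel, one_mul]
  have hx21 : (x₂ : F2 × F2).1
      = (x : F2 × F2).1 * w0 ^ (n : ℤ) * FreeGroup.of 0 ^ (-ts lv) := by
    rw [e21, e11, hts2]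
  -- phase 3 : make the first coordinate equal to w0 ^ (N + 1)
  set l3 : List (Bool × Bool) :=
    rep true (-ts lv) ++ (rep false (-(n : ℤ)) ++ (lu ++ rep false (N + 1))) with hl3
  have htc3 : (tc l3 : ℤ) ≤ tc lv + tc lu := by
    have hstep : tc l3 = (-ts lv).natAbs + tc lu := by
      rw [hl3, tc_append, tc_append, tc_append, tc_rep_true, tc_rep_false, tc_rep_false]
      omega
    have hstep' : (tc l3 : ℤ) = ((-ts lv).natAbs : ℤ) + tc lu := by exact_mod_cast hstep
    rw [Int.natCast_natAbs, abs_neg] at hstep'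
    have h1 := abs_ts_le_tc lv
    linarith
  obtain ⟨x₃, A3, e31, e32⟩ := ph1 φ ha hb hc hd S l3 x₂ (by
    rw [hx22, epsz_zpow, epsz_w0]
    have : |m * 2| = m * 2 := abs_of_nonneg (by rw [hm]; positivity)
    rw [this, hm]
    linarith)
  have hx31 : (x₃ : F2 × F2).1 = w0 ^ (N + 1) := by
    rw [e31, hx21, hl3, prod1_append, prod1_append, prod1_append, Prod.fst_mul, Prod.fst_mul,
      Prod.fst_mul, prod1_rep_true, prod1_rep_false, prod1_rep_false, hlu,
      fst_zpow, fst_zpow, fst_zpow, gt_fst, gp_fst]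
    group
  have hx32 : (x₃ : F2 × F2).2 = w0 ^ m * FreeGroup.of 1 ^ ts l3 := by
    rw [e32, hx22]
  -- the kernel condition forces the residual exponent in phase 3 to vanish
  have hker : chiz (x₃ : F2 × F2).1 + chiz (x₃ : F2 × F2).2 = 0 :=
    (mem_ker_iff φ ha hb hc hd _).mp x₃.2
  rw [hx31, hx32] at hker
  simp only [chiz_mul, chiz_zpow, chiz_w0, chiz_of, mul_zero, mul_one, zero_add] at hker
  have hx32' : (x₃ : F2 × F2).2 = w0 ^ m := by
    rw [hx32, hker, zpow_zero, mul_one]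
  -- phase 4 : adjust the second coordinate to w0 ^ (N + 1)
  set l4 : List (Bool × Bool) := rep false (N + 1 - m) with hl4
  obtain ⟨z, A4, e41, e42⟩ := ph2 φ ha hb hc hd S l4 x₃ (by
    rw [hx31, epsz_zpow, epsz_w0, hl4, tc_rep_false]
    have : |(N + 1) * 2| = (N + 1) * 2 := abs_of_nonneg (by positivity)
    rw [this]
    push_cast
    linarith)
  refine ⟨z, (A1.trans (A2.trans (A3.trans A4))), ?_, ?_⟩
  · rw [e41, hx31, hl4, ts_rep_false, neg_zero, zpow_zero, mul_one]
  · rw [e42, hx32', hl4, prod2_rep_false, snd_zpow, gq_snd, ← zpow_add]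
    ring_nf

end Assemble

section Components
variable (φ : F2 × F2 →* Multiplicative ℤ)
    (ha : φ a = Multiplicative.ofAdd 1) (hb : φ b = Multiplicative.ofAdd 1)
    (hc : φ c = Multiplicative.ofAdd 1) (hd : φ d = Multiplicative.ofAdd 1)

include ha hb hc hd in
/-- Every "far" vertex can be connected, avoiding `S`, to the standard far-away vertex. -/
lemma reach_far (S : Finset φ.ker) (x : φ.ker)
    (h : bnd φ S < ((x : F2 × F2).1).norm ∨ bnd φ S < ((x : F2 × F2).2).norm) :
    ∃ z : φ.ker, Avoid φ S x z ∧
      (z : F2 × F2).1 = w0 ^ ((bnd φ S : ℤ) + 1) ∧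
      (z : F2 × F2).2 = w0 ^ ((bnd φ S : ℤ) + 1) := by
  rcases h with h | h
  · -- first pump the second coordinate, then apply case A
    set n : ℕ := ((x : F2 × F2).2).norm + bnd φ S + 1 with hn
    obtain ⟨x₁, A1, e11, e12⟩ := pump2 φ ha hb hc hd S n x h
    have heps : epsz (x₁ : F2 × F2).2 = epsz (x : F2 × F2).2 + 2 * n := by
      rw [e12, epsz_mul, epsz_zpow, epsz_w0]; ring
    have hfar : bnd φ S < ((x₁ : F2 × F2).2).norm := by
      have h1 := abs_epsz_le_norm (x : F2 × F2).2
      have h2 := abs_epsz_le_norm (x₁ : F2 × F2).2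
      have h3 := neg_abs_le (epsz (x : F2 × F2).2)
      have h4 := le_abs_self (epsz (x₁ : F2 × F2).2)
      have h5 : (n : ℤ) = ((x : F2 × F2).2).norm + (bnd φ S : ℤ) + 1 := by
        rw [hn]; push_cast; ring
      have : (bnd φ S : ℤ) < ((x₁ : F2 × F2).2).norm := by linarith
      exact_mod_cast this
    obtain ⟨z, A2, hz1, hz2⟩ := caseA φ ha hb hc hd S x₁ hfar
    exact ⟨z, A1.trans A2, hz1, hz2⟩
  · exact caseA φ ha hb hc hd S x h

lemma avoid_comp (S : Finset φ.ker) {x y : φ.ker} (hAv : Avoid φ S x y)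
    (hx : x ∉ (S : Set φ.ker)) :
    ∀ hy : y ∉ (S : Set φ.ker),
      (cayleyK φ).componentComplMk hx = (cayleyK φ).componentComplMk hy := by
  induction hAv with
  | refl => intro hy; rfl
  | @tail b y hab hstep ih =>
    intro hy
    obtain ⟨hb, hy', hadj⟩ := hstep
    have hb' : b ∉ (S : Set φ.ker) := by simpa using hb
    exact (ih hb').trans ((cayleyK φ).componentComplMk_eq_of_adj hb' hy hadj)

/-- Balls (with respect to the coordinatewise norm) in the kernel are finite. -/
lemma finite_ball (R : ℕ) :
    {x : φ.ker | ((x : F2 × F2).1).norm ≤ R ∧ ((x : F2 × F2).2).norm ≤ R}.Finite := by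
  classical
  set f : φ.ker → List (Fin 2 × Bool) × List (Fin 2 × Bool) :=
    fun x => (((x : F2 × F2).1).toWord, ((x : F2 × F2).2).toWord) with hf
  have hinj : Function.Injective f := by
    intro x y hxy
    rw [hf] at hxy
    have h1 := FreeGroup.toWord_injective (congrArg Prod.fst hxy)
    have h2 := FreeGroup.toWord_injective (congrArg Prod.snd hxy)
    ext
    · exact h1
    · exact h2
  have hfin : ({l : List (Fin 2 × Bool) | l.length ≤ R} ×ˢ
      {l : List (Fin 2 × Bool) | l.length ≤ R}).Finite :=
    Set.Finite.prod (List.finite_length_le _ R) (List.finite_length_le _ R)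
  apply Set.Finite.of_finite_image _ hinj.injOn
  apply hfin.subset
  rintro p ⟨x, ⟨hx1, hx2⟩, rfl⟩
  exact ⟨hx1, hx2⟩

include ha hb hc hd in
/-- any two infinite components of the complement of `S` coincide. -/
lemma infinite_comp_unique (S : Finset φ.ker)
    (C D : (cayleyK φ).ComponentCompl (S : Set φ.ker))
    (hC : C.supp.Infinite) (hD : D.supp.Infinite) : C = D := by
  classical
  have far : ∀ E : (cayleyK φ).ComponentCompl (S : Set φ.ker), E.supp.Infinite →
      ∃ z : φ.ker, ∃ hz : z ∉ (S : Set φ.ker),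
        (cayleyK φ).componentComplMk hz = E ∧
        (z : F2 × F2).1 = w0 ^ ((bnd φ S : ℤ) + 1) ∧
        (z : F2 × F2).2 = w0 ^ ((bnd φ S : ℤ) + 1) := by
    intro E hE
    obtain ⟨x, hxE, hxball⟩ := hE.exists_notMem_finite (finite_ball φ (bnd φ S))
    have hxfar : bnd φ S < ((x : F2 × F2).1).norm ∨ bnd φ S < ((x : F2 × F2).2).norm := by
      by_contra hcon
      push_neg at hcon
      exact hxball ⟨hcon.1, hcon.2⟩
    obtain ⟨z, hAv, hz1, hz2⟩ := reach_far φ ha hb hc hd S x hxfar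
    have hznotS : z ∉ (S : Set φ.ker) := by
      have : (bnd φ S : ℤ) < |epsz (z : F2 × F2).1| := by
        rw [hz1, epsz_zpow, epsz_w0]
        have h0 : (0:ℤ) ≤ (bnd φ S : ℤ) := Int.natCast_nonneg _
        rw [abs_of_nonneg (by linarith)]
        linarith
      simpa using not_mem_of_abs1 this
    obtain ⟨hxnotS, hmkE⟩ := (SimpleGraph.ComponentCompl.mem_supp_iff).mp hxE
    refine ⟨z, hznotS, ?_, hz1, hz2⟩
    rw [← avoid_comp φ S hAv hxnotS hznotS]
    exact hmkE
  obtain ⟨z₁, hz₁, hmk₁, h₁1, h₁2⟩ := far C hC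
  obtain ⟨z₂, hz₂, hmk₂, h₂1, h₂2⟩ := far D hD
  have : z₁ = z₂ := by
    ext
    · rw [h₁1, h₂1]
    · rw [h₁2, h₂2]
  subst this
  rw [← hmk₁, ← hmk₂]

end Components

section Final
variable (φ : F2 × F2 →* Multiplicative ℤ)
    (ha : φ a = Multiplicative.ofAdd 1) (hb : φ b = Multiplicative.ofAdd 1)
    (hc : φ c = Multiplicative.ofAdd 1) (hd : φ d = Multiplicative.ofAdd 1)

lemma avoid_reachable {S : Finset φ.ker} {x y : φ.ker} (h : Avoid φ S x y) :
    (cayleyK φ).Reachable x y := by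
  rw [SimpleGraph.reachable_iff_reflTransGen]
  exact Relation.ReflTransGen.mono (fun _ _ hz => hz.2.2 :
    ∀ z w : φ.ker, (z ∉ S ∧ w ∉ S ∧ (cayleyK φ).Adj z w) → (cayleyK φ).Adj z w) x y h

include ha hb hc hd in
lemma preconn : (cayleyK φ).Preconnected := by
  classical
  have key : ∀ x : φ.ker, ∃ z : φ.ker, (cayleyK φ).Reachable x z ∧
      (z : F2 × F2).1 = w0 ^ ((bnd φ (∅ : Finset φ.ker) : ℤ) + 1) ∧
      (z : F2 × F2).2 = w0 ^ ((bnd φ (∅ : Finset φ.ker) : ℤ) + 1) := by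
    intro x
    by_cases hx : bnd φ (∅ : Finset φ.ker) < ((x : F2 × F2).1).norm ∨
        bnd φ (∅ : Finset φ.ker) < ((x : F2 × F2).2).norm
    · obtain ⟨z, hAv, hz1, hz2⟩ := reach_far φ ha hb hc hd ∅ x hx
      exact ⟨z, avoid_reachable φ hAv, hz1, hz2⟩
    · push_neg at hx
      have hb0 : bnd φ (∅ : Finset φ.ker) = 0 := rfl
      rw [hb0] at hx
      have hx1 : (x : F2 × F2).1 = 1 := by
        rw [← FreeGroup.norm_eq_zero]; omega
      set g : φ.ker := ⟨gp, gp_mem φ ha hb hc hd⟩ with hgdef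
      have hadj : (cayleyK φ).Adj x (x * g) :=
        adj_mul φ x gp (gp_mem φ ha hb hc hd) gp_ne_one (Or.inl (by left; rfl))
      have hxg1 : ((x * g : φ.ker) : F2 × F2).1 = w0 := by
        show ((x : F2 × F2) * gp).1 = w0
        rw [Prod.fst_mul, gp_fst, hx1, one_mul]
      have hfar : bnd φ (∅ : Finset φ.ker) < (((x * g : φ.ker) : F2 × F2).1).norm := by
        rw [hb0, hxg1]
        have h1 := abs_epsz_le_norm w0
        rw [epsz_w0] at h1
        have h2 : |(2:ℤ)| = 2 := by norm_num
        omega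
      obtain ⟨z, hAv, hz1, hz2⟩ := reach_far φ ha hb hc hd ∅ (x * g) (Or.inl hfar)
      exact ⟨z, (hadj.reachable).trans (avoid_reachable φ hAv), hz1, hz2⟩
  intro x y
  obtain ⟨zx, hrx, hx1, hx2⟩ := key x
  obtain ⟨zy, hry, hy1, hy2⟩ := key y
  have : zx = zy := by
    ext
    · rw [hx1, hy1]
    · rw [hx2, hy2]
  subst this
  exact hrx.trans hry.symm

lemma nbr_finite (v : φ.ker) : ((cayleyK φ).neighborSet v).Finite := by
  classical
  have hTfin : (({b * a⁻¹, d * c⁻¹, d * a⁻¹} : Set (F2 × F2)) ∪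
      (Inv.inv '' ({b * a⁻¹, d * c⁻¹, d * a⁻¹} : Set (F2 × F2)))).Finite := by
    apply Set.Finite.union
    · exact (Set.finite_singleton _).insert _ |>.insert _
    · exact ((Set.finite_singleton _).insert _ |>.insert _).image _
  have hsub : (cayleyK φ).neighborSet v ⊆
      Subtype.val ⁻¹' ((fun g : F2 × F2 => (v : F2 × F2) * g) ''
        (({b * a⁻¹, d * c⁻¹, d * a⁻¹} : Set (F2 × F2)) ∪
          (Inv.inv '' ({b * a⁻¹, d * c⁻¹, d * a⁻¹} : Set (F2 × F2))))) := by
    intro w hw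
    rw [SimpleGraph.mem_neighborSet, cayleyK, SimpleGraph.fromRel_adj] at hw
    obtain ⟨hne, hor⟩ := hw
    rcases hor with h | h
    · exact ⟨((v : F2 × F2))⁻¹ * (w : F2 × F2), Or.inl h, by group⟩
    · refine ⟨((v : F2 × F2))⁻¹ * (w : F2 × F2),
        Or.inr ⟨((w : F2 × F2))⁻¹ * (v : F2 × F2), h, by group⟩, by group⟩
  exact Set.Finite.subset (Set.Finite.preimage Subtype.coe_injective.injOn
    (hTfin.image _)) hsub

include ha hb hc hd in
lemma ker_infinite : Infinite φ.ker := by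
  apply Infinite.of_injective
    (fun k : ℤ => (⟨gt ^ k, zpow_mem (gt_mem φ ha hb hc hd) k⟩ : φ.ker))
  intro k1 k2 h12
  have h1 : (gt ^ k1 : F2 × F2) = gt ^ k2 := congrArg Subtype.val h12
  have h2 := congrArg Prod.snd h1
  rw [snd_zpow, snd_zpow, gt_snd] at h2
  have h3 := congrArg epsz h2
  rw [epsz_zpow, epsz_zpow, epsz_of1, mul_one, mul_one] at h3
  exact h3

end Final
end StallingsAux

/-- `K = ker φ` is one-ended: the Cayley graph of `K` with respect to
`T = {ba⁻¹, dc⁻¹, da⁻¹}` has a nonempty space of ends, and any two ends coincide. -/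
theorem stmt_10 (φ : F2 × F2 →* Multiplicative ℤ)
    (ha : φ a = Multiplicative.ofAdd 1) (hb : φ b = Multiplicative.ofAdd 1)
    (hc : φ c = Multiplicative.ofAdd 1) (hd : φ d = Multiplicative.ofAdd 1) :
    Nonempty (cayleyK φ).end ∧ ∀ e₁ e₂ : (cayleyK φ).end, e₁ = e₂ := by
  classical
  haveI : Infinite φ.ker := StallingsAux.ker_infinite φ ha hb hc hd
  haveI : (cayleyK φ).LocallyFinite := fun v => (StallingsAux.nbr_finite φ v).fintype
  haveI : Fact (cayleyK φ).Preconnected := ⟨StallingsAux.preconn φ ha hb hc hd⟩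
  constructor
  · exact ((cayleyK φ).nonempty_ends_of_infinite).to_subtype
  · intro e₁ e₂
    apply Subtype.ext
    funext K
    exact StallingsAux.infinite_comp_unique φ ha hb hc hd K.unop (e₁.val K) (e₂.val K)
      (SimpleGraph.end_componentCompl_infinite _ e₁ K)
      (SimpleGraph.end_componentCompl_infinite _ e₂ K)
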